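/- Let μ be a compactly supported Borel probability measure on ℝ with infinite support, let (p_k), (r_k), (a_k, b_k) and w be as in the context, and let J be the bounded Jacobi operator on ℓ²(ℤ≥0) with these coefficients. Then for every z ∈ ℂ ∖ ℝ the operator J − z is boundedly invertible and the k-th coordinate of (J − z)^{−1} e_0 equals w(z) p_k(z) + r_k(z) for every k ≥ 0; in particular ∫_ℝ (x − z)^{−1} dμ(x) = ⟨(J − z)^{−1} e_0, e_0⟩. -/

import Mathlib

open MeasureTheory Polynomial

noncomputable section

instance : Fact ((1 : ENNReal) ≤ 2) := ⟨one_le_two⟩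

/-- The topological support of a Borel measure on `ℝ`. -/
def measSupport (μ : Measure ℝ) : Set ℝ := {x : ℝ | ∀ U ∈ nhds x, μ U ≠ 0}

/-- The Hilbert space `ℓ²(ℤ≥0)`. -/
abbrev JacobiH : Type := lp (fun _ : ℕ => ℂ) 2

/-- The standard orthonormal basis of `ℓ²(ℤ≥0)`. -/
def stdBasis (k : ℕ) : JacobiH := lp.single 2 k 1


lemma integrable_polyEval (μ : Measure ℝ)
    (hmom : ∀ m : ℕ, Integrable (fun x : ℝ => |x| ^ m) μ) (q : Polynomial ℝ) :
    Integrable (fun x => q.eval x) μ := by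
  induction q using Polynomial.induction_on' with
  | add f g hf hg => simpa [Pi.add_def] using hf.add hg
  | monomial n c =>
      have h1 : Integrable (fun x : ℝ => x ^ n) μ := by
        refine (hmom n).mono' ?_ ?_
        · exact (measurable_id.pow_const n).aestronglyMeasurable
        · exact Filter.Eventually.of_forall fun x => by simp [abs_pow]
      simpa [Polynomial.eval_monomial, mul_comm] using h1.const_mul c

lemma bessel_real (μ : Measure ℝ) [IsProbabilityMeasure μ] (p : ℕ → Polynomial ℝ)
    (hint : ∀ q : Polynomial ℝ, Integrable (fun x => q.eval x) μ)
    (horth : ∀ n m, ∫ x, (p n).eval x * (p m).eval x ∂μ = if n = m then 1 else 0)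
    (g : ℝ → ℝ) (hg2 : Integrable (fun x => g x ^ 2) μ)
    (hgp : ∀ q : Polynomial ℝ, Integrable (fun x => g x * q.eval x) μ)
    (s : Finset ℕ) :
    ∑ k ∈ s, (∫ x, (p k).eval x * g x ∂μ) ^ 2 ≤ ∫ x, g x ^ 2 ∂μ := by
  set c : ℕ → ℝ := fun k => ∫ x, (p k).eval x * g x ∂μ with hc
  set G : Polynomial ℝ := ∑ k ∈ s, Polynomial.C (c k) * p k with hG
  have hGe : ∀ x : ℝ, G.eval x = ∑ k ∈ s, c k * (p k).eval x := by
    intro x; simp [hG, Polynomial.eval_finset_sum]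
  have e1 : ∫ x, g x * G.eval x ∂μ = ∑ k ∈ s, (c k) ^ 2 := by
    have : ∀ x : ℝ, g x * G.eval x = ∑ k ∈ s, g x * (Polynomial.C (c k) * p k).eval x := by
      intro x; rw [hGe]; rw [Finset.mul_sum]; simp [mul_left_comm]
    rw [show (fun x => g x * G.eval x) = fun x => ∑ k ∈ s, g x * (Polynomial.C (c k) * p k).eval x
      from funext this]
    rw [integral_finset_sum _ (fun k _ => hgp _)]
    refine Finset.sum_congr rfl fun k _ => ?_
    have : ∀ x : ℝ, g x * (Polynomial.C (c k) * p k).eval x = c k * ((p k).eval x * g x) := by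
      intro x; simp; ring
    rw [show (fun x => g x * (Polynomial.C (c k) * p k).eval x)
        = fun x => c k * ((p k).eval x * g x) from funext this, integral_const_mul]
    rw [show (∫ x, (p k).eval x * g x ∂μ) = c k from rfl]; ring
  have e2 : ∫ x, G.eval x ^ 2 ∂μ = ∑ k ∈ s, (c k) ^ 2 := by
    have expand : ∀ x : ℝ, G.eval x ^ 2
        = ∑ j ∈ s, ∑ k ∈ s, (c j * c k) * ((p j * p k).eval x) := by
      intro x
      rw [hGe, sq, Finset.sum_mul_sum]
      refine Finset.sum_congr rfl fun j _ => Finset.sum_congr rfl fun k _ => ?_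
      simp; ring
    rw [show (fun x => G.eval x ^ 2)
        = fun x => ∑ j ∈ s, ∑ k ∈ s, (c j * c k) * ((p j * p k).eval x) from funext expand]
    rw [integral_finset_sum _ (fun j _ => integrable_finset_sum _
      (fun k _ => (hint (p j * p k)).const_mul _))]
    have : ∀ j ∈ s, ∫ x, ∑ k ∈ s, (c j * c k) * ((p j * p k).eval x) ∂μ
        = ∑ k ∈ s, (c j * c k) * (if j = k then (1:ℝ) else 0) := by
      intro j _
      rw [integral_finset_sum _ (fun k _ => (hint (p j * p k)).const_mul _)]
      refine Finset.sum_congr rfl fun k _ => ?_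
      rw [integral_const_mul]
      congr 1
      rw [← horth j k]
      simp
    rw [Finset.sum_congr rfl this]
    refine Finset.sum_congr rfl fun j hj => ?_
    have h2 : ∀ k ∈ s, c j * c k * (if j = k then (1:ℝ) else 0)
        = if j = k then c j * c k else 0 := by
      intro k _; split <;> simp
    rw [Finset.sum_congr rfl h2, Finset.sum_ite_eq s j (fun k => c j * c k)]
    simp [hj, sq]
  have hpos : 0 ≤ ∫ x, (g x - G.eval x) ^ 2 ∂μ := integral_nonneg fun x => sq_nonneg _
  have expand2 : ∫ x, (g x - G.eval x) ^ 2 ∂μ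
      = ∫ x, g x ^ 2 ∂μ - 2 * (∑ k ∈ s, (c k) ^ 2) + ∑ k ∈ s, (c k) ^ 2 := by
    have hI1 : Integrable (fun x => g x * G.eval x) μ := hgp G
    have hI2 : Integrable (fun x => G.eval x ^ 2) μ := by
      have := hint (G * G)
      simpa [sq] using this
    have : ∀ x : ℝ, (g x - G.eval x) ^ 2 = g x ^ 2 - 2 * (g x * G.eval x) + G.eval x ^ 2 := by
      intro x; ring
    rw [show (fun x => (g x - G.eval x) ^ 2)
        = fun x => g x ^ 2 - 2 * (g x * G.eval x) + G.eval x ^ 2 from funext this]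
    rw [integral_add (by exact (hg2.sub (hI1.const_mul 2))) hI2,
        integral_sub hg2 (hI1.const_mul 2), integral_const_mul, e1, e2]
  rw [expand2] at hpos
  linarith

lemma f_ne (z : ℂ) (hz : z.im ≠ 0) (x : ℝ) : (x : ℂ) - z ≠ 0 := by
  intro h
  exact hz (by simpa using (congrArg Complex.im h).symm)

lemma f_cont (z : ℂ) (hz : z.im ≠ 0) : Continuous (fun x : ℝ => ((x:ℂ) - z)⁻¹) :=
  Continuous.inv₀ (by continuity) (f_ne z hz)

lemma f_bdd (z : ℂ) (hz : z.im ≠ 0) (x : ℝ) : ‖((x:ℂ) - z)⁻¹‖ ≤ |z.im|⁻¹ := by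
  rw [norm_inv]
  refine inv_anti₀ (abs_pos.2 hz) ?_
  calc |z.im| = |((x:ℂ) - z).im| := by simp
  _ ≤ ‖(x:ℂ) - z‖ := Complex.abs_im_le_norm _

lemma intC (μ : Measure ℝ)
    (hmom : ∀ m : ℕ, Integrable (fun x : ℝ => |x| ^ m) μ)
    (z : ℂ) (hz : z.im ≠ 0) (q : Polynomial ℝ) :
    Integrable (fun x : ℝ => ((q.eval x : ℝ) : ℂ) * ((x:ℂ) - z)⁻¹) μ := by
  refine Integrable.mono' (((integrable_polyEval μ hmom q).abs).const_mul |z.im|⁻¹) ?_ ?_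
  · exact (Continuous.mul (Complex.continuous_ofReal.comp (Polynomial.continuous q))
      (f_cont z hz)).aestronglyMeasurable
  · refine Filter.Eventually.of_forall fun x => ?_
    rw [norm_mul]
    calc ‖((q.eval x : ℝ) : ℂ)‖ * ‖((x:ℂ) - z)⁻¹‖ ≤ ‖((q.eval x : ℝ):ℂ)‖ * |z.im|⁻¹ :=
          mul_le_mul_of_nonneg_left (f_bdd z hz x) (norm_nonneg _)
    _ = |z.im|⁻¹ * |q.eval x| := by rw [mul_comm]; simp

lemma memlp_q (μ : Measure ℝ) [IsProbabilityMeasure μ]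
    (hmom : ∀ m : ℕ, Integrable (fun x : ℝ => |x| ^ m) μ)
    (p : ℕ → Polynomial ℝ)
    (horth : ∀ n m, ∫ x, (p n).eval x * (p m).eval x ∂μ = if n = m then 1 else 0)
    (z : ℂ) (hz : z.im ≠ 0) :
    Memℓp (fun k : ℕ => ∫ x : ℝ, (((p k).eval x : ℝ) : ℂ) * ((x:ℂ) - z)⁻¹ ∂μ) 2 := by
  set f : ℝ → ℂ := fun x => ((x:ℂ) - z)⁻¹ with hf
  set g1 : ℝ → ℝ := fun x => (f x).re with hg1
  set g2 : ℝ → ℝ := fun x => (f x).im with hg2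
  have hg1c : Continuous g1 := Complex.continuous_re.comp (f_cont z hz)
  have hg2c : Continuous g2 := Complex.continuous_im.comp (f_cont z hz)
  have hg1b : ∀ x, |g1 x| ≤ |z.im|⁻¹ := fun x =>
    le_trans (Complex.abs_re_le_norm _) (f_bdd z hz x)
  have hg2b : ∀ x, |g2 x| ≤ |z.im|⁻¹ := fun x =>
    le_trans (Complex.abs_im_le_norm _) (f_bdd z hz x)
  have hsq : ∀ (g : ℝ → ℝ), Continuous g → (∀ x, |g x| ≤ |z.im|⁻¹) →
      Integrable (fun x => g x ^ 2) μ := by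
    intro g hc hb
    refine Integrable.mono' (integrable_const ((|z.im|⁻¹)^2)) ?_ ?_
    · exact (hc.pow 2).aestronglyMeasurable
    · refine Filter.Eventually.of_forall fun x => ?_
      have : |g x ^ 2| = |g x|^2 := by rw [abs_pow]
      rw [Real.norm_eq_abs, this]
      exact pow_le_pow_left₀ (abs_nonneg _) (hb x) 2
  have hgp : ∀ (g : ℝ → ℝ), Continuous g → (∀ x, |g x| ≤ |z.im|⁻¹) →
      ∀ q : Polynomial ℝ, Integrable (fun x => g x * q.eval x) μ := by
    intro g hc hb q
    refine Integrable.mono' (((integrable_polyEval μ hmom q).abs).const_mul |z.im|⁻¹) ?_ ?_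
    · exact (hc.mul (Polynomial.continuous q)).aestronglyMeasurable
    · refine Filter.Eventually.of_forall fun x => ?_
      rw [Real.norm_eq_abs, abs_mul]
      exact mul_le_mul_of_nonneg_right (hb x) (abs_nonneg _)
  have hcoord : ∀ k : ℕ, (∫ x : ℝ, (((p k).eval x : ℝ) : ℂ) * f x ∂μ)
      = Complex.mk (∫ x, (p k).eval x * g1 x ∂μ) (∫ x, (p k).eval x * g2 x ∂μ) := by
    intro k
    have hi := intC μ hmom z hz (p k)
    have hre := integral_re hi
    have him := integral_im hi
    simp only [RCLike.re_to_complex, RCLike.im_to_complex] at hre him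
    apply Complex.ext
    · rw [show ((⟨_,_⟩ : ℂ)).re = ∫ x, (p k).eval x * g1 x ∂μ from rfl, ← hre]
      congr 1; funext x; simp [hg1, hf]
    · rw [show ((⟨_,_⟩ : ℂ)).im = ∫ x, (p k).eval x * g2 x ∂μ from rfl, ← him]
      congr 1; funext x; simp [hg2, hf]
  have key : ∀ s : Finset ℕ,
      ∑ k ∈ s, ‖∫ x : ℝ, (((p k).eval x : ℝ) : ℂ) * f x ∂μ‖ ^ 2
        ≤ ∫ x, g1 x ^ 2 ∂μ + ∫ x, g2 x ^ 2 ∂μ := by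
    intro s
    have : ∀ k : ℕ, ‖∫ x : ℝ, (((p k).eval x : ℝ) : ℂ) * f x ∂μ‖ ^ 2
        = (∫ x, (p k).eval x * g1 x ∂μ)^2 + (∫ x, (p k).eval x * g2 x ∂μ)^2 := by
      intro k
      rw [hcoord k, Complex.sq_norm, Complex.normSq_mk]
      ring
    rw [Finset.sum_congr rfl fun k _ => this k, Finset.sum_add_distrib]
    exact add_le_add
      (bessel_real μ p (integrable_polyEval μ hmom) horth g1
        (hsq g1 hg1c hg1b) (hgp g1 hg1c hg1b) s)
      (bessel_real μ p (integrable_polyEval μ hmom) horth g2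
        (hsq g2 hg2c hg2b) (hgp g2 hg2c hg2b) s)
  apply memℓp_gen
  have h2 : ((2:ENNReal)).toReal = (2:ℝ) := by norm_num
  have : Summable fun k : ℕ => ‖∫ x : ℝ, (((p k).eval x : ℝ) : ℂ) * f x ∂μ‖ ^ (2:ℕ) :=
    summable_of_sum_le (fun k => by positivity) key
  convert this using 2 with k
  rw [h2]
  norm_num [Real.rpow_natCast]
  rfl

set_option maxHeartbeats 1000000 in
/-- Let `μ` be a compactly supported Borel probability measure with infinite support, let
`(p_k)`, `(r_k)`, `(a_k, b_k)` be its orthonormal polynomials, associated polynomials and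
recurrence coefficients, and let `J` be the bounded (self-adjoint) Jacobi operator with these
coefficients.  Then for every `z ∈ ℂ \ ℝ` the operator `J − z` is boundedly invertible, the
`k`-th coordinate of `(J − z)⁻¹ e₀` equals `w(z) p_k(z) + r_k(z)`, and in particular
`∫ (x − z)⁻¹ dμ(x) = ⟨(J − z)⁻¹ e₀, e₀⟩`. -/
theorem resolvent_asymptotically_free_solution (μ : Measure ℝ) [IsProbabilityMeasure μ]
    (hmom : ∀ m : ℕ, Integrable (fun x : ℝ => |x| ^ m) μ)
    (hsupp : (measSupport μ).Infinite)
    (hcomp : IsCompact (measSupport μ))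
    (p : ℕ → Polynomial ℝ)
    (hdeg : ∀ n, (p n).degree = n)
    (hlead : ∀ n, 0 < (p n).leadingCoeff)
    (horth : ∀ n m, ∫ x, (p n).eval x * (p m).eval x ∂μ = if n = m then 1 else 0)
    (a b : ℕ → ℝ) (hapos : ∀ k, 0 < a k)
    (hrec : ∀ k : ℕ, X * p (k + 1) =
      C (a (k + 1)) * p (k + 2) + C (b (k + 1)) * p (k + 1) + C (a k) * p k)
    (hrec0 : X * p 0 = C (a 0) * p 1 + C (b 0) * p 0)
    (r : ℕ → Polynomial ℝ)
    (hr0 : r 0 = 0) (hr1 : r 1 = C (a 0)⁻¹)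
    (hrrec : ∀ k : ℕ, X * r (k + 1) =
      C (a (k + 1)) * r (k + 2) + C (b (k + 1)) * r (k + 1) + C (a k) * r k)
    (J : JacobiH →L[ℂ] JacobiH) (hJsa : IsSelfAdjoint J)
    (hJe : ∀ k : ℕ, J (stdBasis k) = (a k : ℂ) • stdBasis (k + 1) + (b k : ℂ) • stdBasis k
      + (match k with
         | 0 => (0 : JacobiH)
         | (j + 1) => (a j : ℂ) • stdBasis j)) :
    ∀ z : ℂ, z.im ≠ 0 →
      IsUnit (J - z • (1 : JacobiH →L[ℂ] JacobiH)) ∧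
      (∀ k : ℕ, ((Ring.inverse (J - z • (1 : JacobiH →L[ℂ] JacobiH)) (stdBasis 0)
          : JacobiH) : ℕ → ℂ) k
        = (∫ x : ℝ, ((x : ℂ) - z)⁻¹ ∂μ) * Polynomial.aeval z (p k)
          + Polynomial.aeval z (r k)) ∧
      (∫ x : ℝ, ((x : ℂ) - z)⁻¹ ∂μ)
        = @inner ℂ _ _ (stdBasis 0)
            (Ring.inverse (J - z • (1 : JacobiH →L[ℂ] JacobiH)) (stdBasis 0)) := by
  intro z hz
  -- invertibility
  have hunit : IsUnit (J - z • (1 : JacobiH →L[ℂ] JacobiH)) := by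
    have h1 : z ∉ spectrum ℂ J := fun h => hz (by rw [hJsa.mem_spectrum_eq_re h]; simp)
    rw [spectrum.notMem_iff] at h1
    have : (algebraMap ℂ (JacobiH →L[ℂ] JacobiH)) z - J = -(J - z • 1) := by
      simp [Algebra.algebraMap_eq_smul_one]
    rw [this] at h1
    simpa using h1.neg
  -- p 0 = 1
  have hp0 : p 0 = 1 := by
    have hc : p 0 = C ((p 0).coeff 0) := Polynomial.eq_C_of_degree_le_zero (le_of_eq (hdeg 0))
    set c := (p 0).coeff 0 with hcdef
    have hcpos : 0 < c := by
      have := hlead 0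
      rwa [hc, Polynomial.leadingCoeff_C] at this
    have hone : c * c = 1 := by
      have := horth 0 0
      rw [hc] at this
      simpa [Polynomial.eval_C] using this
    have : c = 1 := by
      rcases mul_self_eq_one_iff.1 hone with h | h
      · exact h
      · linarith
    rw [hc, this]; simp
  -- the sequence of second kind functions
  set q : ℕ → ℂ := fun k => ∫ x : ℝ, (((p k).eval x : ℝ) : ℂ) * ((x:ℂ) - z)⁻¹ ∂μ with hqdef
  have hq0 : q 0 = ∫ x : ℝ, ((x:ℂ) - z)⁻¹ ∂μ := by
    rw [hqdef]; simp [hp0]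
  -- mean of p k
  have hmean : ∀ k : ℕ, ∫ x : ℝ, (((p k).eval x : ℝ) : ℂ) ∂μ = if k = 0 then 1 else 0 := by
    intro k
    have h1 : ∫ x : ℝ, (p k).eval x ∂μ = if k = 0 then 1 else 0 := by
      have := horth k 0
      simpa [hp0] using this
    have h2 : ∫ x : ℝ, (((p k).eval x : ℝ) : ℂ) ∂μ = ((∫ x : ℝ, (p k).eval x ∂μ : ℝ) : ℂ) :=
      integral_ofReal
    rw [h2, h1]
    split <;> simp
  -- the splitting identity
  have hsplit : ∀ Q : Polynomial ℝ,
      ∫ x : ℝ, (((X * Q : Polynomial ℝ).eval x : ℝ) : ℂ) * ((x:ℂ) - z)⁻¹ ∂μ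
        = (∫ x : ℝ, ((Q.eval x : ℝ) : ℂ) ∂μ)
          + z * ∫ x : ℝ, ((Q.eval x : ℝ) : ℂ) * ((x:ℂ) - z)⁻¹ ∂μ := by
    intro Q
    have hpt : ∀ x : ℝ, (((X * Q : Polynomial ℝ).eval x : ℝ) : ℂ) * ((x:ℂ) - z)⁻¹
        = ((Q.eval x : ℝ) : ℂ) + z * (((Q.eval x : ℝ) : ℂ) * ((x:ℂ) - z)⁻¹) := by
      intro x
      have h := f_ne z hz x
      push_cast [Polynomial.eval_mul, Polynomial.eval_X]
      field_simp
      ring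
    have hA : Integrable (fun x : ℝ => ((Q.eval x : ℝ) : ℂ)) μ :=
      (integrable_polyEval μ hmom Q).ofReal
    have hB : Integrable (fun x : ℝ => z * (((Q.eval x : ℝ) : ℂ) * ((x:ℂ) - z)⁻¹)) μ :=
      (intC μ hmom z hz Q).const_mul z
    rw [show (fun x : ℝ => (((X * Q : Polynomial ℝ).eval x : ℝ) : ℂ) * ((x:ℂ) - z)⁻¹)
        = fun x : ℝ => ((Q.eval x : ℝ) : ℂ) + z * (((Q.eval x : ℝ) : ℂ) * ((x:ℂ) - z)⁻¹)
        from funext hpt]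
    rw [integral_add hA hB, integral_const_mul]
  -- linear expansion
  have hlin : ∀ (c1 c2 c3 : ℝ) (Q1 Q2 Q3 : Polynomial ℝ),
      ∫ x : ℝ, ((((C c1 * Q1 + C c2 * Q2 + C c3 * Q3 : Polynomial ℝ)).eval x : ℝ) : ℂ)
          * ((x:ℂ) - z)⁻¹ ∂μ
        = (c1:ℂ) * ∫ x : ℝ, ((Q1.eval x : ℝ) : ℂ) * ((x:ℂ) - z)⁻¹ ∂μ
          + (c2:ℂ) * ∫ x : ℝ, ((Q2.eval x : ℝ) : ℂ) * ((x:ℂ) - z)⁻¹ ∂μ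
          + (c3:ℂ) * ∫ x : ℝ, ((Q3.eval x : ℝ) : ℂ) * ((x:ℂ) - z)⁻¹ ∂μ := by
    intro c1 c2 c3 Q1 Q2 Q3
    have hpt : ∀ x : ℝ,
        ((((C c1 * Q1 + C c2 * Q2 + C c3 * Q3 : Polynomial ℝ)).eval x : ℝ) : ℂ) * ((x:ℂ) - z)⁻¹
        = (c1:ℂ) * (((Q1.eval x : ℝ) : ℂ) * ((x:ℂ) - z)⁻¹)
          + (c2:ℂ) * (((Q2.eval x : ℝ) : ℂ) * ((x:ℂ) - z)⁻¹)
          + (c3:ℂ) * (((Q3.eval x : ℝ) : ℂ) * ((x:ℂ) - z)⁻¹) := by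
      intro x
      push_cast [Polynomial.eval_add, Polynomial.eval_mul, Polynomial.eval_C]
      ring
    have h1 : Integrable (fun x : ℝ => (c1:ℂ) * (((Q1.eval x : ℝ) : ℂ) * ((x:ℂ) - z)⁻¹)) μ :=
      (intC μ hmom z hz Q1).const_mul _
    have h2 : Integrable (fun x : ℝ => (c2:ℂ) * (((Q2.eval x : ℝ) : ℂ) * ((x:ℂ) - z)⁻¹)) μ :=
      (intC μ hmom z hz Q2).const_mul _
    have h3 : Integrable (fun x : ℝ => (c3:ℂ) * (((Q3.eval x : ℝ) : ℂ) * ((x:ℂ) - z)⁻¹)) μ :=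
      (intC μ hmom z hz Q3).const_mul _
    have h12 : Integrable (fun x : ℝ => (c1:ℂ) * (((Q1.eval x : ℝ) : ℂ) * ((x:ℂ) - z)⁻¹)
        + (c2:ℂ) * (((Q2.eval x : ℝ) : ℂ) * ((x:ℂ) - z)⁻¹)) μ := h1.add h2
    rw [show (fun x : ℝ =>
        ((((C c1 * Q1 + C c2 * Q2 + C c3 * Q3 : Polynomial ℝ)).eval x : ℝ) : ℂ) * ((x:ℂ) - z)⁻¹)
        = fun x : ℝ => (c1:ℂ) * (((Q1.eval x : ℝ) : ℂ) * ((x:ℂ) - z)⁻¹)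
          + (c2:ℂ) * (((Q2.eval x : ℝ) : ℂ) * ((x:ℂ) - z)⁻¹)
          + (c3:ℂ) * (((Q3.eval x : ℝ) : ℂ) * ((x:ℂ) - z)⁻¹) from funext hpt]
    rw [integral_add h12 h3, integral_add h1 h2,
      integral_const_mul, integral_const_mul, integral_const_mul]
  -- recurrences for q
  have qrec : ∀ k : ℕ, (a (k+1) : ℂ) * q (k+2) + (b (k+1) : ℂ) * q (k+1) + (a k : ℂ) * q k
      = z * q (k+1) := by
    intro k
    have h1 := hsplit (p (k+1))
    rw [hrec k, hlin, hmean (k+1), if_neg (by omega : ¬ (k+1 = 0))] at h1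
    simp only [hqdef]
    linear_combination h1
  have qrec0 : (a 0 : ℂ) * q 1 + (b 0 : ℂ) * q 0 = 1 + z * q 0 := by
    have h1 := hsplit (p 0)
    rw [hrec0, hmean 0, if_pos rfl] at h1
    have h2 : (C (a 0) * p 1 + C (b 0) * p 0 : Polynomial ℝ)
        = C (a 0) * p 1 + C (b 0) * p 0 + C 0 * p 0 := by simp
    rw [h2, hlin] at h1
    simp only [Complex.ofReal_zero, zero_mul, add_zero] at h1
    simp only [hqdef]
    linear_combination h1
  -- the candidate vector
  have hmem : Memℓp (fun k : ℕ => q k) 2 := by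
    simpa [hqdef] using memlp_q μ hmom p horth z hz
  set V : JacobiH := ⟨fun k => q k, hmem⟩ with hVdef
  have hVco : ∀ j : ℕ, (V : ℕ → ℂ) j = q j := fun j => rfl
  -- coordinates via inner products
  have hco : ∀ (u : JacobiH) (j : ℕ), (u : ℕ → ℂ) j = @inner ℂ _ _ (stdBasis j) u := by
    intro u j
    rw [stdBasis, lp.inner_single_left]
    simp
  have happly : ∀ (u : JacobiH) (k : ℕ), ((J u : JacobiH) : ℕ → ℂ) k
      = (a k : ℂ) * (u : ℕ → ℂ) (k+1) + (b k : ℂ) * (u : ℕ → ℂ) k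
        + (match k with | 0 => (0:ℂ) | (j+1) => (a j : ℂ) * (u : ℕ → ℂ) j) := by
    intro u k
    rw [hco (J u) k]
    have hadj : @inner ℂ _ _ (stdBasis k) (J u) = @inner ℂ _ _ (J (stdBasis k)) u := by
      have h := ContinuousLinearMap.adjoint_inner_left J u (stdBasis k)
      rw [hJsa.adjoint_eq] at h
      exact h.symm
    rw [hadj, hJe k]
    cases k with
    | zero =>
      rw [inner_add_left, inner_add_left, inner_smul_left, inner_smul_left]
      rw [← hco u 1, ← hco u 0]
      simp [Complex.conj_ofReal]
    | succ j =>
      rw [inner_add_left, inner_add_left, inner_smul_left, inner_smul_left, inner_smul_left]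
      rw [← hco u (j+2), ← hco u (j+1), ← hco u j]
      simp [Complex.conj_ofReal]
  -- (J - z) V = e₀
  have hJV : (J - z • (1 : JacobiH →L[ℂ] JacobiH)) V = stdBasis 0 := by
    apply lp.ext
    funext k
    have hcoe : (((J - z • (1:JacobiH →L[ℂ] JacobiH)) V : JacobiH) : ℕ → ℂ) k
        = ((J V : JacobiH) : ℕ → ℂ) k - z * (V : ℕ → ℂ) k := by
      rw [ContinuousLinearMap.sub_apply, ContinuousLinearMap.smul_apply,
        ContinuousLinearMap.one_apply, lp.coeFn_sub, Pi.sub_apply, lp.coeFn_smul, Pi.smul_apply]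
      simp [smul_eq_mul]
    have hstd : ((stdBasis 0 : JacobiH) : ℕ → ℂ) k = if k = 0 then 1 else 0 := by
      rw [stdBasis, lp.single_apply]
      split <;> simp_all
    show _ = ((stdBasis 0 : JacobiH) : ℕ → ℂ) k
    rw [hcoe, happly V k, hstd]
    cases k with
    | zero =>
      rw [if_pos rfl, hVco, hVco]
      simp only [hVco]
      linear_combination qrec0
    | succ n =>
      rw [if_neg (by omega : ¬ (n+1 = 0))]
      simp only [hVco]
      linear_combination qrec n
  -- identify the resolvent vector
  have hRinv : (Ring.inverse (J - z • (1:JacobiH →L[ℂ] JacobiH)) (stdBasis 0) : JacobiH) = V := by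
    rw [← hJV, ← ContinuousLinearMap.mul_apply, Ring.inverse_mul_cancel _ hunit,
      ContinuousLinearMap.one_apply]
  -- identify q with w p + r
  have ha0 : (a 0 : ℂ) ≠ 0 := by exact_mod_cast (hapos 0).ne'
  have key2 : ∀ k : ℕ,
      q k = (∫ x : ℝ, ((x:ℂ) - z)⁻¹ ∂μ) * Polynomial.aeval z (p k) + Polynomial.aeval z (r k)
      ∧ q (k+1) = (∫ x : ℝ, ((x:ℂ) - z)⁻¹ ∂μ) * Polynomial.aeval z (p (k+1))
          + Polynomial.aeval z (r (k+1)) := by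
    intro k
    induction k with
    | zero =>
      constructor
      · rw [hq0, hp0, hr0]; simp
      · apply mul_left_cancel₀ ha0
        have hp1 : (a 0 : ℂ) * Polynomial.aeval z (p 1) = z - (b 0 : ℂ) := by
          have h := congrArg (Polynomial.aeval z : Polynomial ℝ →ₐ[ℝ] ℂ) hrec0
          simp only [map_add, map_mul, Polynomial.aeval_X, Polynomial.aeval_C, hp0, map_one,
            mul_one, Complex.coe_algebraMap] at h
          linear_combination -h
        have hr1' : (a 0:ℂ) * Polynomial.aeval z (r 1) = 1 := by
          rw [hr1, Polynomial.aeval_C, Complex.coe_algebraMap, Complex.ofReal_inv]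
          exact mul_inv_cancel₀ ha0
        linear_combination qrec0 + (z - (b 0:ℂ)) * hq0
          - (∫ x : ℝ, ((x:ℂ) - z)⁻¹ ∂μ) * hp1 - hr1'
    | succ n ih =>
      refine ⟨ih.2, ?_⟩
      rw [show n + 1 + 1 = n + 2 from rfl]
      have ha : (a (n+1) : ℂ) ≠ 0 := by exact_mod_cast (hapos (n+1)).ne'
      apply mul_left_cancel₀ ha
      have hp2 : (a (n+1):ℂ) * Polynomial.aeval z (p (n+2))
          = z * Polynomial.aeval z (p (n+1)) - (b (n+1):ℂ) * Polynomial.aeval z (p (n+1))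
            - (a n:ℂ) * Polynomial.aeval z (p n) := by
        have h := congrArg (Polynomial.aeval z : Polynomial ℝ →ₐ[ℝ] ℂ) (hrec n)
        simp only [map_add, map_mul, Polynomial.aeval_X, Polynomial.aeval_C,
          Complex.coe_algebraMap] at h
        linear_combination -h
      have hr2 : (a (n+1):ℂ) * Polynomial.aeval z (r (n+2))
          = z * Polynomial.aeval z (r (n+1)) - (b (n+1):ℂ) * Polynomial.aeval z (r (n+1))
            - (a n:ℂ) * Polynomial.aeval z (r n) := by
        have h := congrArg (Polynomial.aeval z : Polynomial ℝ →ₐ[ℝ] ℂ) (hrrec n)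
        simp only [map_add, map_mul, Polynomial.aeval_X, Polynomial.aeval_C,
          Complex.coe_algebraMap] at h
        linear_combination -h
      linear_combination qrec n + (z - (b (n+1):ℂ)) * ih.2 - (a n : ℂ) * ih.1
        - (∫ x : ℝ, ((x:ℂ) - z)⁻¹ ∂μ) * hp2 - hr2
  refine ⟨hunit, ?_, ?_⟩
  · intro k
    rw [hRinv, hVco]
    exact (key2 k).1
  · rw [hRinv, ← hco V 0, hVco]
    exact hq0.symm
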